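/- Let m < 0. If f solves f''' + ((m+1)/2) f f'' - m (f')² = 0 on [0,∞) with f'(0) = -1 and f'(t) → 0 as t → ∞, then f''(0) > 0. -/

import Mathlib

open Real Set Filter Topology

theorem stmt4 (m : ℝ) (hm : m < 0) (f f' f'' f''' : ℝ → ℝ)
    (hf : ∀ t ∈ Set.Ici (0:ℝ), HasDerivWithinAt f (f' t) (Set.Ici 0) t)
    (hf' : ∀ t ∈ Set.Ici (0:ℝ), HasDerivWithinAt f' (f'' t) (Set.Ici 0) t)
    (hf'' : ∀ t ∈ Set.Ici (0:ℝ), HasDerivWithinAt f'' (f''' t) (Set.Ici 0) t)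
    (hode : ∀ t ∈ Set.Ici (0:ℝ),
      f''' t + (m + 1) / 2 * f t * f'' t - m * (f' t) ^ 2 = 0)
    (h0 : f' 0 = -1)
    (hlim : Filter.Tendsto f' Filter.atTop (nhds 0)) :
    0 < f'' 0 := by
  by_contra hcon
  push_neg at hcon
  -- notation
  set c : ℝ := (m + 1) / 2 with hc
  have hfc : ContinuousOn f (Ici 0) := fun t ht => (hf t ht).continuousWithinAt
  have hf'c : ContinuousOn f' (Ici 0) := fun t ht => (hf' t ht).continuousWithinAt
  have hf''c : ContinuousOn f'' (Ici 0) := fun t ht => (hf'' t ht).continuousWithinAt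
  -- primitive of f
  set F : ℝ → ℝ := fun t => ∫ s in (0:ℝ)..t, f s with hFdef
  have hint : ∀ b : ℝ, 0 ≤ b → IntervalIntegrable f MeasureTheory.volume 0 b := by
    intro b hb
    apply ContinuousOn.intervalIntegrable
    apply hfc.mono
    rw [Set.uIcc_of_le hb]
    exact fun x hx => hx.1
  -- interior derivatives become honest derivatives
  have hderiv : ∀ x : ℝ, 0 < x →
      HasDerivAt f (f' x) x ∧ HasDerivAt f' (f'' x) x ∧ HasDerivAt f'' (f''' x) x := by
    intro x hx
    have hmem : Ici (0:ℝ) ∈ 𝓝 x := Ici_mem_nhds hx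
    exact ⟨(hf x hx.le).hasDerivAt hmem, (hf' x hx.le).hasDerivAt hmem,
      (hf'' x hx.le).hasDerivAt hmem⟩
  have hFderiv : ∀ x : ℝ, 0 < x → HasDerivAt F (f x) x := by
    intro x hx
    have hca : ContinuousAt f x :=
      (hfc x hx.le).continuousAt (Ici_mem_nhds hx)
    exact intervalIntegral.integral_hasDerivAt_right (hint x hx.le)
      ⟨Ioi 0, Ioi_mem_nhds hx,
        (hfc.mono Ioi_subset_Ici_self).aestronglyMeasurable measurableSet_Ioi⟩ hca
  have hF0 : HasDerivWithinAt F (f 0) (Ici 0) 0 := by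
    exact intervalIntegral.integral_hasDerivWithinAt_right (hint 0 le_rfl)
      ⟨Ioi 0, self_mem_nhdsWithin,
        (hfc.mono Ioi_subset_Ici_self).aestronglyMeasurable measurableSet_Ioi⟩
      ((hfc 0 Set.self_mem_Ici).mono Ioi_subset_Ici_self)
  have hFc : ContinuousOn F (Ici 0) := by
    intro x hx
    rcases eq_or_lt_of_le (Set.mem_Ici.mp hx) with h | h
    · exact h ▸ hF0.continuousWithinAt
    · exact (hFderiv x h).continuousAt.continuousWithinAt
  have hF00 : F 0 = 0 := by simp [hFdef]
  -- the auxiliary function G = exp(c·F)·f''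
  set G : ℝ → ℝ := fun t => Real.exp (c * F t) * f'' t with hGdef
  have hGc : ContinuousOn G (Ici 0) :=
    ((Real.continuous_exp.comp_continuousOn (hFc.const_smul c)).mul hf''c)
  have hGanti : AntitoneOn G (Ici 0) := by
    apply antitoneOn_of_hasDerivWithinAt_nonpos (convex_Ici 0) hGc
      (f' := fun x => Real.exp (c * F x) * (m * (f' x) ^ 2))
    · intro x hx
      rw [interior_Ici] at hx ⊢
      have hd : HasDerivAt G
          (Real.exp (c * F x) * (c * f x) * f'' x + Real.exp (c * F x) * f''' x) x := by
        exact (((hFderiv x hx).const_mul c).exp.mul (hderiv x hx).2.2)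
      have heq : Real.exp (c * F x) * (c * f x) * f'' x + Real.exp (c * F x) * f''' x
          = Real.exp (c * F x) * (m * (f' x) ^ 2) := by
        have := hode x (Set.mem_Ici.mpr (le_of_lt hx))
        nlinarith [Real.exp_pos (c * F x)]
      exact (heq ▸ hd).hasDerivWithinAt
    · intro x hx
      exact mul_nonpos_of_nonneg_of_nonpos (Real.exp_pos _).le
        (mul_nonpos_of_nonpos_of_nonneg hm.le (sq_nonneg _))
  -- hence f'' ≤ 0 on [0, ∞)
  have hf''le : ∀ t : ℝ, 0 ≤ t → f'' t ≤ 0 := by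
    intro t ht
    have h1 : G t ≤ G 0 := hGanti (self_mem_Ici) ht ht
    have h2 : G 0 = f'' 0 := by simp [hGdef, hF00]
    have h3 : G t ≤ 0 := by linarith [h2 ▸ h1, hcon]
    have h4 : (0:ℝ) < Real.exp (c * F t) := Real.exp_pos _
    have h5 : Real.exp (c * F t) * f'' t ≤ Real.exp (c * F t) * 0 := by
      rw [mul_zero]; exact h3
    exact le_of_mul_le_mul_left h5 h4
  -- hence f' is antitone on [0, ∞)
  have hf'anti : AntitoneOn f' (Ici 0) := by
    apply antitoneOn_of_hasDerivWithinAt_nonpos (convex_Ici 0) hf'c (f' := f'')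
    · intro x hx
      rw [interior_Ici] at hx ⊢
      exact (hderiv x hx).2.1.hasDerivWithinAt
    · intro x hx
      rw [interior_Ici] at hx
      exact hf''le x hx.le
  have hle : ∀ t : ℝ, 0 ≤ t → f' t ≤ -1 := by
    intro t ht
    have := hf'anti self_mem_Ici ht ht
    linarith [h0 ▸ this]
  have : (0:ℝ) ≤ -1 :=
    le_of_tendsto hlim (Filter.eventually_atTop.mpr ⟨0, fun t ht => hle t ht⟩)
  linarith
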